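/- Let T be a real number, b : ℕ → ℝ, and q : ℕ → ℝ strictly increasing with q(0) ≥ 0. Assume that the series ∑_{i=0}^∞ b_i² e^{2 q_i t} converges for every t < T and that b_{i} ≠ 0 for at least one i. Then the function ψ(t) = log(∑_{i=0}^∞ b_i² e^{2 q_i t}) is convex on the interval (−∞, T). Moreover, if for some t < T one has ψ(t) − ψ(t − log 2) = ψ(t − log 2) − ψ(t − 2 log 2), then there exists i₀ such that b_i = 0 for every i ≠ i₀, and the common value of both sides is log(4^{q_{i₀}}). -/

import Mathlib

private lemma my_tsum_pos {f : ℕ → ℝ} (hf : Summable f) (hnn : ∀ i, 0 ≤ f i) (i : ℕ)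
    (hi : 0 < f i) : 0 < ∑' j, f j :=
  hi.trans_le (Summable.le_tsum hf i fun j _ => hnn j)

set_option maxHeartbeats 1000000 in
/-- Cauchy–Schwarz rigidity for nonnegative series: if
`(∑ a)(∑ a x²) = (∑ a x)²` then `a` vanishes at any index whose `x`-value
differs from that of an index in the support. -/
private lemma aux_rigid (a xv : ℕ → ℝ) (han : ∀ i, 0 ≤ a i) (hxn : ∀ i, 0 ≤ xv i)
    (h0 : Summable a) (h1 : Summable (fun i => a i * xv i))
    (h2 : Summable (fun i => a i * xv i ^ 2))
    (heq : (∑' i, a i) * (∑' i, a i * xv i ^ 2) = (∑' i, a i * xv i) ^ 2)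
    {i j : ℕ} (hij : xv i ≠ xv j) (haj : a j ≠ 0) : a i = 0 := by
  set g : ℕ × ℕ → ℝ := fun p => a p.1 * a p.2 * (xv p.1 - xv p.2) ^ 2 with hg_def
  have han2 : ∀ k, 0 ≤ a k * xv k ^ 2 := fun k => mul_nonneg (han k) (sq_nonneg _)
  have han1 : ∀ k, 0 ≤ a k * xv k := fun k => mul_nonneg (han k) (hxn k)
  have hp1 : Summable (fun p : ℕ × ℕ => (a p.1 * xv p.1 ^ 2) * a p.2) :=
    h2.mul_of_nonneg h0 han2 han
  have hp2 : Summable (fun p : ℕ × ℕ => a p.1 * (a p.2 * xv p.2 ^ 2)) :=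
    h0.mul_of_nonneg h2 han han2
  have hp3 : Summable (fun p : ℕ × ℕ => (a p.1 * xv p.1) * (a p.2 * xv p.2)) :=
    h1.mul_of_nonneg h1 han1 han1
  have hgeq : g = fun p : ℕ × ℕ =>
      ((a p.1 * xv p.1 ^ 2) * a p.2 + a p.1 * (a p.2 * xv p.2 ^ 2)) -
        2 * ((a p.1 * xv p.1) * (a p.2 * xv p.2)) := by
    funext p; simp only [hg_def]; ring
  have hgsum : Summable g := by
    rw [hgeq]; exact (hp1.add hp2).sub (hp3.mul_left 2)
  have e1 : ∑' p : ℕ × ℕ, (a p.1 * xv p.1 ^ 2) * a p.2 =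
      (∑' k, a k * xv k ^ 2) * ∑' k, a k := (Summable.tsum_mul_tsum h2 h0 hp1).symm
  have e2 : ∑' p : ℕ × ℕ, a p.1 * (a p.2 * xv p.2 ^ 2) =
      (∑' k, a k) * ∑' k, a k * xv k ^ 2 := (Summable.tsum_mul_tsum h0 h2 hp2).symm
  have e3 : ∑' p : ℕ × ℕ, (a p.1 * xv p.1) * (a p.2 * xv p.2) =
      (∑' k, a k * xv k) * ∑' k, a k * xv k := (Summable.tsum_mul_tsum h1 h1 hp3).symm
  have htg : ∑' p, g p = 0 := by
    rw [hgeq, Summable.tsum_sub (hp1.add hp2) (hp3.mul_left 2), Summable.tsum_add hp1 hp2, tsum_mul_left,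
      e1, e2, e3]
    nlinarith [heq]
  have hgnn : ∀ p : ℕ × ℕ, 0 ≤ g p := fun p =>
    mul_nonneg (mul_nonneg (han _) (han _)) (sq_nonneg _)
  have hg0 : g (i, j) = 0 :=
    le_antisymm (htg ▸ Summable.le_tsum hgsum (i, j) fun p _ => hgnn p) (hgnn _)
  have : a i * a j * (xv i - xv j) ^ 2 = 0 := hg0
  rcases mul_eq_zero.1 this with h | h
  · rcases mul_eq_zero.1 h with h' | h'
    · exact h'
    · exact absurd h' haj
  · exact absurd h (pow_ne_zero 2 (sub_ne_zero.2 hij))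

set_option maxHeartbeats 1000000 in
/-- If `∑ b_i² e^{2 q_i t}` converges for every `t < T` (with `q`
strictly increasing, `q 0 ≥ 0`, and some `b_i ≠ 0`), then
`ψ(t) = log ∑ b_i² e^{2 q_i t}` is convex on `(-∞, T)`; and if for some `t < T` the
increments `ψ(t) - ψ(t - log 2)` and `ψ(t - log 2) - ψ(t - 2 log 2)` agree, then all
but one coefficient `b_{i₀}` vanish and the common value is `log (4^{q_{i₀}})`. -/
theorem stmt6 (T : ℝ) (b q : ℕ → ℝ) (hq : StrictMono q) (hq0 : 0 ≤ q 0)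
    (hconv : ∀ t : ℝ, t < T → Summable (fun i => b i ^ 2 * Real.exp (2 * q i * t)))
    (hb : ∃ i, b i ≠ 0)
    (ψ : ℝ → ℝ) (hψ : ∀ t, ψ t = Real.log (∑' i, b i ^ 2 * Real.exp (2 * q i * t))) :
    ConvexOn ℝ (Set.Iio T) ψ ∧
    (∀ t : ℝ, t < T →
      ψ t - ψ (t - Real.log 2) = ψ (t - Real.log 2) - ψ (t - 2 * Real.log 2) →
      ∃ i₀ : ℕ, (∀ i, i ≠ i₀ → b i = 0) ∧
        ψ t - ψ (t - Real.log 2) = Real.log ((4 : ℝ) ^ (q i₀))) := by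
  obtain ⟨j₀, hbj₀⟩ := hb
  have hbsq₀ : (0 : ℝ) < b j₀ ^ 2 :=
    lt_of_le_of_ne (sq_nonneg _) (Ne.symm (pow_ne_zero 2 hbj₀))
  -- positivity of all the relevant sums
  have hnn : ∀ (s : ℝ) (i : ℕ), 0 ≤ b i ^ 2 * Real.exp (2 * q i * s) := fun s i =>
    mul_nonneg (sq_nonneg _) (Real.exp_pos _).le
  have hpos : ∀ s : ℝ, s < T → 0 < ∑' i, b i ^ 2 * Real.exp (2 * q i * s) := fun s hs =>
    my_tsum_pos (hconv s hs) (hnn s) j₀ (mul_pos hbsq₀ (Real.exp_pos _))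
  constructor
  · -- Convexity
    rw [convexOn_iff_forall_pos]
    refine ⟨convex_Iio T, ?_⟩
    intro x hx y hy la mu hla hmu hlm
    simp only [smul_eq_mul]
    simp only [Set.mem_Iio] at hx hy
    have hz : la * x + mu * y < T := by
      have h1 : la * x < la * T := by exact (mul_lt_mul_iff_right₀ hla).2 hx
      have h2 : mu * y < mu * T := by exact (mul_lt_mul_iff_right₀ hmu).2 hy
      have h3 : la * T + mu * T = T := by rw [← add_mul, hlm, one_mul]
      linarith
    set u : ℕ → ℝ := fun i => b i ^ 2 * Real.exp (2 * q i * x) with hu_def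
    set v : ℕ → ℝ := fun i => b i ^ 2 * Real.exp (2 * q i * y) with hv_def
    set w : ℕ → ℝ := fun i => b i ^ 2 * Real.exp (2 * q i * (la * x + mu * y)) with hw_def
    have hU : Summable u := hconv x hx
    have hV : Summable v := hconv y hy
    have hW : Summable w := hconv _ hz
    set U := ∑' i, u i with hU_def
    set V := ∑' i, v i with hV_def
    have hun : ∀ i, 0 ≤ u i := hnn x
    have hvn : ∀ i, 0 ≤ v i := hnn y
    have hUpos : 0 < U := hpos x hx
    have hVpos : 0 < V := hpos y hy
    -- term-wise identity
    have hwid : ∀ i, w i = u i ^ la * v i ^ mu := by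
      intro i
      by_cases hbi : b i = 0
      · simp [hw_def, hu_def, hv_def, hbi, Real.zero_rpow hla.ne']
      · have hbsq : (0 : ℝ) < b i ^ 2 :=
          lt_of_le_of_ne (sq_nonneg _) (Ne.symm (pow_ne_zero 2 hbi))
        have hu : u i = Real.exp (Real.log (b i ^ 2) + 2 * q i * x) := by
          rw [Real.exp_add, Real.exp_log hbsq]
        have hv : v i = Real.exp (Real.log (b i ^ 2) + 2 * q i * y) := by
          rw [Real.exp_add, Real.exp_log hbsq]
        have hw : w i = Real.exp (Real.log (b i ^ 2) + 2 * q i * (la * x + mu * y)) := by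
          rw [Real.exp_add, Real.exp_log hbsq]
        rw [hu, hv, hw, Real.rpow_def_of_pos (Real.exp_pos _),
          Real.rpow_def_of_pos (Real.exp_pos _), Real.log_exp, Real.log_exp, ← Real.exp_add]
        congr 1
        linear_combination Real.log (b i ^ 2) * hlm.symm
    -- term-wise bound
    set P := U ^ la * V ^ mu with hP_def
    have hPpos : 0 < P := mul_pos (Real.rpow_pos_of_pos hUpos _) (Real.rpow_pos_of_pos hVpos _)
    have hUla : (0:ℝ) < U ^ la := Real.rpow_pos_of_pos hUpos _
    have hVmu : (0:ℝ) < V ^ mu := Real.rpow_pos_of_pos hVpos _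
    set c1 := la / U * P with hc1_def
    set c2 := mu / V * P with hc2_def
    have hbound : ∀ i, w i ≤ c1 * u i + c2 * v i := by
      intro i
      have key := Real.geom_mean_le_arith_mean2_weighted hla.le hmu.le
        (div_nonneg (hun i) hUpos.le) (div_nonneg (hvn i) hVpos.le) hlm
      rw [Real.div_rpow (hun i) hUpos.le, Real.div_rpow (hvn i) hVpos.le] at key
      have key2 := mul_le_mul_of_nonneg_right key hPpos.le
      calc w i = u i ^ la / U ^ la * (v i ^ mu / V ^ mu) * P := by
            rw [hwid i, hP_def]; field_simp
        _ ≤ (la * (u i / U) + mu * (v i / V)) * P := key2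
        _ = c1 * u i + c2 * v i := by
            rw [hc1_def, hc2_def]; field_simp
    have hRS : Summable (fun i => c1 * u i + c2 * v i) :=
      (hU.mul_left c1).add (hV.mul_left c2)
    have hsumle : (∑' i, w i) ≤ P := by
      have h1 : (∑' i, w i) ≤ ∑' i, (c1 * u i + c2 * v i) :=
        Summable.tsum_le_tsum hbound hW hRS
      have h2 : (∑' i, (c1 * u i + c2 * v i)) = c1 * U + c2 * V := by
        rw [Summable.tsum_add (hU.mul_left c1) (hV.mul_left c2), tsum_mul_left, tsum_mul_left]
      have h3 : c1 * U + c2 * V = P := by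
        have e1 : la / U * P * U = la * P := by field_simp
        have e2 : mu / V * P * V = mu * P := by field_simp
        rw [hc1_def, hc2_def, e1, e2, ← add_mul, hlm, one_mul]
      rw [h2, h3] at h1; exact h1
    have hWpos : 0 < ∑' i, w i := hpos _ hz
    rw [hψ, hψ, hψ]
    calc Real.log (∑' i, w i) ≤ Real.log P := Real.log_le_log hWpos hsumle
      _ = la * Real.log U + mu * Real.log V := by
          rw [hP_def, Real.log_mul hUla.ne' hVmu.ne', Real.log_rpow hUpos,
            Real.log_rpow hVpos]
  · -- Rigidity
    intro t ht heq
    have hlog2 : (0 : ℝ) < Real.log 2 := Real.log_pos one_lt_two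
    have ht1 : t - Real.log 2 < T := by linarith
    have ht2 : t - 2 * Real.log 2 < T := by linarith
    set a : ℕ → ℝ := fun i => b i ^ 2 * Real.exp (2 * q i * (t - 2 * Real.log 2)) with ha_def
    set xv : ℕ → ℝ := fun i => Real.exp (2 * q i * Real.log 2) with hxv_def
    have han : ∀ i, 0 ≤ a i := hnn _
    have hxn : ∀ i, 0 ≤ xv i := fun i => (Real.exp_pos _).le
    have hid1 : ∀ i, b i ^ 2 * Real.exp (2 * q i * (t - Real.log 2)) = a i * xv i := by
      intro i
      rw [ha_def, hxv_def]
      simp only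
      rw [mul_assoc (b i ^ 2), ← Real.exp_add]
      congr 1
      exact Real.exp_eq_exp.2 (by ring)
    have hid2 : ∀ i, b i ^ 2 * Real.exp (2 * q i * t) = a i * xv i ^ 2 := by
      intro i
      rw [ha_def, hxv_def]
      simp only
      have e : Real.exp (2 * q i * Real.log 2) ^ 2 =
          Real.exp (2 * q i * Real.log 2 + 2 * q i * Real.log 2) := by
        rw [Real.exp_add]; exact sq _
      rw [e, mul_assoc (b i ^ 2), ← Real.exp_add]
      congr 1
      exact Real.exp_eq_exp.2 (by ring)
    have h0 : Summable a := hconv _ ht2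
    have h1 : Summable (fun i => a i * xv i) := (hconv _ ht1).congr hid1
    have h2 : Summable (fun i => a i * xv i ^ 2) := (hconv _ ht).congr hid2
    set S0 := ∑' i, a i with hS0_def
    set S1 := ∑' i, a i * xv i with hS1_def
    set S2 := ∑' i, a i * xv i ^ 2 with hS2_def
    have hS0pos : 0 < S0 := hpos _ ht2
    have hS1pos : 0 < S1 := by
      rw [hS1_def, ← tsum_congr hid1]; exact hpos _ ht1
    have hS2pos : 0 < S2 := by
      rw [hS2_def, ← tsum_congr hid2]; exact hpos _ ht
    -- rewrite ψ values
    have hψt : ψ t = Real.log S2 := by rw [hψ, tsum_congr hid2]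
    have hψt1 : ψ (t - Real.log 2) = Real.log S1 := by rw [hψ, tsum_congr hid1]
    have hψt2 : ψ (t - 2 * Real.log 2) = Real.log S0 := by rw [hψ]
    rw [hψt, hψt1, hψt2] at heq
    have hSeq : S0 * S2 = S1 ^ 2 := by
      have hL : Real.log (S0 * S2) = Real.log (S1 * S1) := by
        rw [Real.log_mul hS0pos.ne' hS2pos.ne', Real.log_mul hS1pos.ne' hS1pos.ne']
        linarith
      calc S0 * S2 = Real.exp (Real.log (S0 * S2)) :=
            (Real.exp_log (mul_pos hS0pos hS2pos)).symm
        _ = Real.exp (Real.log (S1 * S1)) := by rw [hL]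
        _ = S1 * S1 := Real.exp_log (mul_pos hS1pos hS1pos)
        _ = S1 ^ 2 := (sq S1).symm
    refine ⟨j₀, ?_, ?_⟩
    · intro i hi
      have hxij : xv i ≠ xv j₀ := by
        rw [hxv_def]
        simp only [ne_eq, Real.exp_eq_exp]
        intro h
        exact hi (hq.injective (by
          have := mul_left_cancel₀ (two_ne_zero) (mul_right_cancel₀ hlog2.ne' h)
          exact this))
      have haj : a j₀ ≠ 0 := (mul_pos hbsq₀ (Real.exp_pos _)).ne'
      have hai : a i = 0 := aux_rigid a xv han hxn h0 h1 h2 hSeq hxij haj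
      rw [ha_def] at hai
      simp only at hai
      rcases mul_eq_zero.1 hai with h | h
      · exact pow_eq_zero_iff two_ne_zero |>.1 h
      · exact absurd h (Real.exp_pos _).ne'
    · -- common value
      have hzero : ∀ i, i ≠ j₀ → a i * xv i ^ 2 = 0 := by
        intro i hi
        have hxij : xv i ≠ xv j₀ := by
          rw [hxv_def]
          simp only [ne_eq, Real.exp_eq_exp]
          intro h
          exact hi (hq.injective (mul_left_cancel₀ two_ne_zero
            (mul_right_cancel₀ hlog2.ne' h)))
        have haj : a j₀ ≠ 0 := (mul_pos hbsq₀ (Real.exp_pos _)).ne'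
        rw [aux_rigid a xv han hxn h0 h1 h2 hSeq hxij haj, zero_mul]
      have hzero1 : ∀ i, i ≠ j₀ → a i * xv i = 0 := by
        intro i hi
        have h := hzero i hi
        rcases mul_eq_zero.1 h with h' | h'
        · rw [h', zero_mul]
        · exact absurd h' (pow_ne_zero 2 (Real.exp_pos _).ne')
      have hS2e : S2 = a j₀ * xv j₀ ^ 2 := (hasSum_single j₀ hzero).tsum_eq
      have hS1e : S1 = a j₀ * xv j₀ := (hasSum_single j₀ hzero1).tsum_eq
      have haj0 : 0 < a j₀ := mul_pos hbsq₀ (Real.exp_pos _)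
      have hxj0 : 0 < xv j₀ := Real.exp_pos _
      rw [hψt, hψt1, hS2e, hS1e,
        Real.log_mul haj0.ne' (pow_ne_zero 2 hxj0.ne'),
        Real.log_mul haj0.ne' hxj0.ne', Real.log_pow]
      have hlogx : Real.log (xv j₀) = 2 * q j₀ * Real.log 2 := by
        rw [hxv_def]; exact Real.log_exp _
      have hlog4 : Real.log ((4 : ℝ) ^ (q j₀)) = q j₀ * (2 * Real.log 2) := by
        rw [Real.log_rpow (by norm_num : (0:ℝ) < 4)]
        congr 1
        rw [show (4 : ℝ) = 2 ^ 2 by norm_num, Real.log_pow]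
        push_cast; ring
      rw [hlog4, hlogx]
      push_cast; ring
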